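/- Let m > 0 and let t̃ : (0, ∞) → ℝ be a differentiable function satisfying |t̃'(r)| < r/(r + 2m) for every r > 0. Then the limit L := lim_{r → 0⁺} t̃(r) exists in ℝ, and for every r > 0 one has |t̃(r) − L| ≤ r − 2m·log(1 + r/(2m)); equivalently, L − [r − 2m·log(1 + r/(2m))] ≤ t̃(r) ≤ L + [r − 2m·log(1 + r/(2m))]. -/

import Mathlib

/-- Let `m > 0` and let `t̃ : (0, ∞) → ℝ` be a differentiable function satisfying
`|t̃'(r)| < r/(r + 2m)` for every `r > 0`. Then the limit `L := lim_{r → 0⁺} t̃(r)`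
exists in `ℝ`, and for every `r > 0` one has
`|t̃(r) − L| ≤ r − 2m·log(1 + r/(2m))`; equivalently,
`L − [r − 2m·log(1 + r/(2m))] ≤ t̃(r) ≤ L + [r − 2m·log(1 + r/(2m))]`. -/
theorem cauchy_surface_radial_profile_bounded (m : ℝ) (hm : 0 < m)
    (ttil ttil' : ℝ → ℝ)
    (hd : ∀ r : ℝ, 0 < r → HasDerivAt ttil (ttil' r) r)
    (hb : ∀ r : ℝ, 0 < r → |ttil' r| < r / (r + 2 * m)) :
    ∃ L : ℝ, Filter.Tendsto ttil (nhdsWithin 0 (Set.Ioi 0)) (nhds L) ∧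
      ∀ r : ℝ, 0 < r → |ttil r - L| ≤ r - 2 * m * Real.log (1 + r / (2 * m)) := by
  have h2m : (0:ℝ) < 2 * m := by linarith
  set F : ℝ → ℝ := fun r => r - 2 * m * Real.log (1 + r / (2 * m)) with hFdef
  -- derivative of F
  have hFd : ∀ r : ℝ, 0 < r → HasDerivAt F (r / (r + 2 * m)) r := by
    intro r hr
    have h1 : 0 < 1 + r / (2 * m) := by positivity
    have hin : HasDerivAt (fun r : ℝ => 1 + r / (2 * m)) (1 / (2 * m)) r := by
      simpa using ((hasDerivAt_id r).div_const (2 * m)).const_add 1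
    have hlog : HasDerivAt (fun r : ℝ => Real.log (1 + r / (2 * m)))
        ((1 + r / (2 * m))⁻¹ * (1 / (2 * m))) r :=
      by have := (Real.hasDerivAt_log h1.ne').comp r hin; exact this
    have hF : HasDerivAt F (1 - 2 * m * ((1 + r / (2 * m))⁻¹ * (1 / (2 * m)))) r :=
      (hasDerivAt_id r).sub (hlog.const_mul (2 * m))
    convert hF using 1
    have hr2m : r + 2 * m ≠ 0 := by positivity
    field_simp
    ring
  -- F is nonnegative on positives
  have hFnonneg : ∀ r : ℝ, 0 < r → 0 ≤ F r := by
    intro r hr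
    have h1 : 0 < 1 + r / (2 * m) := by positivity
    have := Real.log_le_sub_one_of_pos h1
    have h2 : Real.log (1 + r / (2 * m)) ≤ r / (2 * m) := by linarith
    have h3 : 2 * m * Real.log (1 + r / (2 * m)) ≤ 2 * m * (r / (2 * m)) :=
      mul_le_mul_of_nonneg_left h2 (by positivity)
    have h4 : 2 * m * (r / (2 * m)) = r := by field_simp
    simp only [hFdef]
    linarith
  -- auxiliary functions g = F - ttil, h = F + ttil are monotone on (0, ∞)
  set g : ℝ → ℝ := fun r => F r - ttil r with hgdef
  set h : ℝ → ℝ := fun r => F r + ttil r with hhdef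
  have hgmono : MonotoneOn g (Set.Ioi 0) := by
    refine (strictMonoOn_of_hasDerivWithinAt_pos (f' := fun x => x / (x + 2 * m) - ttil' x)
      (convex_Ioi 0) ?_ ?_ ?_).monotoneOn
    · intro x hx
      exact ((hFd x hx).sub (hd x hx)).continuousAt.continuousWithinAt
    · intro x hx
      rw [interior_Ioi] at hx ⊢
      exact ((hFd x hx).sub (hd x hx)).hasDerivWithinAt
    · intro x hx
      rw [interior_Ioi] at hx
      have := (abs_lt.mp (hb x hx)).2
      linarith
  have hhmono : MonotoneOn h (Set.Ioi 0) := by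
    refine (strictMonoOn_of_hasDerivWithinAt_pos (f' := fun x => x / (x + 2 * m) + ttil' x)
      (convex_Ioi 0) ?_ ?_ ?_).monotoneOn
    · intro x hx
      exact ((hFd x hx).add (hd x hx)).continuousAt.continuousWithinAt
    · intro x hx
      rw [interior_Ioi] at hx ⊢
      exact ((hFd x hx).add (hd x hx)).hasDerivWithinAt
    · intro x hx
      rw [interior_Ioi] at hx
      have := (abs_lt.mp (hb x hx)).1
      linarith
  -- key inequality
  have key : ∀ a b : ℝ, 0 < a → a ≤ b → |ttil b - ttil a| ≤ F b - F a := by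
    intro a b ha hab
    have hb' : 0 < b := lt_of_lt_of_le ha hab
    have h1 : g a ≤ g b := hgmono ha hb' hab
    have h2 : h a ≤ h b := hhmono ha hb' hab
    simp only [hgdef, hhdef] at h1 h2
    rw [abs_le]
    constructor <;> linarith
  -- bounded below
  have hF1 : 0 ≤ F 1 := hFnonneg 1 one_pos
  have hgbdd : BddBelow (g '' Set.Ioi 0) := by
    refine ⟨-ttil 1 - F 1, ?_⟩
    rintro y ⟨x, hx, rfl⟩
    rw [Set.mem_Ioi] at hx
    rcases le_or_gt x 1 with hx1 | hx1
    · have := (abs_le.mp (key x 1 hx hx1)).1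
      have hFx := hFnonneg x hx
      simp only [hgdef]
      linarith
    · have := hgmono (Set.mem_Ioi.mpr one_pos) (Set.mem_Ioi.mpr (lt_trans one_pos hx1)) hx1.le
      simp only [hgdef] at this ⊢
      linarith
  have hhbdd : BddBelow (h '' Set.Ioi 0) := by
    refine ⟨ttil 1 - F 1, ?_⟩
    rintro y ⟨x, hx, rfl⟩
    rw [Set.mem_Ioi] at hx
    rcases le_or_gt x 1 with hx1 | hx1
    · have := (abs_le.mp (key x 1 hx hx1)).2
      have hFx := hFnonneg x hx
      simp only [hhdef]
      linarith
    · have := hhmono (Set.mem_Ioi.mpr one_pos) (Set.mem_Ioi.mpr (lt_trans one_pos hx1)) hx1.le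
      simp only [hhdef] at this ⊢
      linarith
  have hgt : Filter.Tendsto g (nhdsWithin 0 (Set.Ioi 0)) (nhds (sInf (g '' Set.Ioi 0))) :=
    hgmono.tendsto_nhdsGT hgbdd
  have hht : Filter.Tendsto h (nhdsWithin 0 (Set.Ioi 0)) (nhds (sInf (h '' Set.Ioi 0))) :=
    hhmono.tendsto_nhdsGT hhbdd
  set L : ℝ := (sInf (h '' Set.Ioi 0) - sInf (g '' Set.Ioi 0)) / 2 with hLdef
  have httil : Filter.Tendsto ttil (nhdsWithin 0 (Set.Ioi 0)) (nhds L) := by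
    have : Filter.Tendsto (fun r => (h r - g r) / 2) (nhdsWithin 0 (Set.Ioi 0)) (nhds L) :=
      (hht.sub hgt).div_const 2
    refine this.congr (fun r => ?_)
    simp only [hgdef, hhdef]
    ring
  -- F tends to 0 from the right
  have hFt : Filter.Tendsto F (nhdsWithin 0 (Set.Ioi 0)) (nhds 0) := by
    have hc : ContinuousAt F 0 := by
      have hlc : ContinuousAt (fun r : ℝ => Real.log (1 + r / (2 * m))) 0 := by
        apply ContinuousAt.comp (g := Real.log) (x := (0:ℝ))
        · simp only [zero_div, add_zero]
          exact Real.continuousAt_log (by norm_num)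
        · fun_prop
      exact continuousAt_id.sub (hlc.const_mul (2 * m))
    have hF0 : F 0 = 0 := by simp [hFdef]
    have ht : Filter.Tendsto F (nhdsWithin 0 (Set.Ioi 0)) (nhds (F 0)) :=
      hc.continuousWithinAt.tendsto
    rwa [hF0] at ht
  refine ⟨L, httil, ?_⟩
  intro r hr
  have hev : ∀ᶠ a in nhdsWithin 0 (Set.Ioi 0), |ttil r - ttil a| ≤ F r - F a := by
    filter_upwards [Ioo_mem_nhdsGT_of_mem (Set.left_mem_Ico.mpr hr)] with a ha
    exact key a r ha.1 ha.2.le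
  have h1 : Filter.Tendsto (fun a => |ttil r - ttil a|) (nhdsWithin 0 (Set.Ioi 0))
      (nhds (|ttil r - L|)) := ((tendsto_const_nhds.sub httil).abs)
  have h2 : Filter.Tendsto (fun a => F r - F a) (nhdsWithin 0 (Set.Ioi 0))
      (nhds (F r - 0)) := tendsto_const_nhds.sub hFt
  have := le_of_tendsto_of_tendsto h1 h2 hev
  simpa using this
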